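/- arXiv:2311.07679 — 2 statements merged into one kernel-verified Lean document; each statement's English description precedes it below -/
import Mathlib

section
/- If the Smith normal form of the r×n integer matrix H_X has diagonal entries d₁, ..., d_r, and H_Z is an integer matrix with full row rank r_Z satisfying H_Z H_Xᵀ = 0 and ker(H_Zᵀ)/im(H_Xᵀ) well-defined, then the quotient group ker(H_Zᵀ : ℤⁿ → ℤ^{r_Z}) / im(H_Xᵀ : ℤ^r → ℤⁿ) is isomorphic to (⊕ᵢ ℤ_{dᵢ}) ⊕ ℤ^{n - r - r_Z}. -/
open Matrix

/-- `D` is a Smith normal form of the `r × n` integer matrix `H`. -/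
def IsSmithNormalFormOf {r n : ℕ} (D H : Matrix (Fin r) (Fin n) ℤ) : Prop :=
  (∃ U U' : Matrix (Fin r) (Fin r) ℤ, ∃ V V' : Matrix (Fin n) (Fin n) ℤ,
      U * U' = 1 ∧ U' * U = 1 ∧ V * V' = 1 ∧ V' * V = 1 ∧ U * H * V = D) ∧
  (∀ (i : Fin r) (j : Fin n), (i : ℕ) ≠ (j : ℕ) → D i j = 0) ∧
  (∀ (i : Fin r) (j : Fin n), (i : ℕ) = (j : ℕ) → 0 ≤ D i j) ∧
  (∀ (i i' : Fin r) (j j' : Fin n), (i : ℕ) = (j : ℕ) → (i' : ℕ) = (j' : ℕ) →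
      (i : ℕ) + 1 = (i' : ℕ) → D i j ∣ D i' j')

/-- The coordinatewise `Int.cast` linear map `ℤ^q → ℚ^q`. -/
noncomputable def intCastLM (q : ℕ) : (Fin q → ℤ) →ₗ[ℤ] (Fin q → ℚ) where
  toFun x := fun j => (x j : ℚ)
  map_add' x y := by funext j; simp
  map_smul' c x := by funext j; simp

@[simp] lemma intCastLM_apply (q : ℕ) (x : Fin q → ℤ) (j : Fin q) :
    intCastLM q x j = (x j : ℚ) := rfl

lemma intCastLM_injective (q : ℕ) : Function.Injective (intCastLM q) := by
  intro x y h
  funext j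
  have := congrFun h j
  simp only [intCastLM_apply, Int.cast_inj] at this
  exact this

lemma ker_intMatrix_free_rank {p q : ℕ} (A : Matrix (Fin p) (Fin q) ℤ)
    (hA : Function.Injective fun v : Fin p → ℤ => Matrix.vecMul v A) :
    Nonempty (↥(LinearMap.ker (Matrix.mulVecLin A)) ≃+ (Fin (q - p) → ℤ)) := by
  classical
  set AQ : Matrix (Fin p) (Fin q) ℚ := A.map (Int.cast : ℤ → ℚ) with hAQ
  have hcast_mulVec : ∀ x : Fin q → ℤ,
      AQ.mulVec (intCastLM q x) = fun i => ((A.mulVec x i : ℤ) : ℚ) := by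
    intro x
    funext i
    exact ((Int.castRingHom ℚ).map_mulVec A x i).symm
  -- basis of the integer kernel
  obtain ⟨t, b⟩ := Submodule.basisOfPid (Pi.basisFun ℤ (Fin q)) (LinearMap.ker (Matrix.mulVecLin A))
  set f : ↥(LinearMap.ker (Matrix.mulVecLin A)) →ₗ[ℤ] (Fin q → ℚ) :=
    (intCastLM q) ∘ₗ (LinearMap.ker (Matrix.mulVecLin A)).subtype with hf
  have hfinj : Function.Injective f :=
    (intCastLM_injective q).comp (Submodule.injective_subtype _)
  set c : Fin t → (Fin q → ℚ) := fun i => f (b i) with hc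
  have hliZ : LinearIndependent ℤ c :=
    b.linearIndependent.map' f (LinearMap.ker_eq_bot.2 hfinj)
  have hli : LinearIndependent ℚ c := (LinearIndependent.iff_fractionRing ℤ ℚ).1 hliZ
  have hmemker : ∀ x : ↥(LinearMap.ker (Matrix.mulVecLin A)),
      f x ∈ LinearMap.ker (Matrix.mulVecLin AQ) := by
    intro x
    have hx : A.mulVec x = 0 := x.2
    simp only [LinearMap.mem_ker, mulVecLin_apply, hf, LinearMap.coe_comp,
      Function.comp_apply, Submodule.coe_subtype]
    rw [hcast_mulVec, hx]
    funext i
    simp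
  have hsp : Submodule.span ℚ (Set.range c) = LinearMap.ker (Matrix.mulVecLin AQ) := by
    apply le_antisymm
    · rw [Submodule.span_le]
      rintro _ ⟨i, rfl⟩
      exact hmemker (b i)
    · intro z hz
      obtain ⟨N, hN⟩ := IsLocalization.exist_integer_multiples_of_finite
        (nonZeroDivisors ℤ) z
      choose w hw using hN
      have hNne : ((N : ℤ) : ℚ) ≠ 0 := by
        have := nonZeroDivisors.coe_ne_zero N
        exact_mod_cast this
      have hcw : intCastLM q w = ((N : ℤ) : ℚ) • z := by
        funext j
        have := hw j
        simpa [zsmul_eq_mul] using this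
      have hwker : w ∈ LinearMap.ker (Matrix.mulVecLin A) := by
        rw [LinearMap.mem_ker, mulVecLin_apply]
        have h1 : AQ.mulVec (intCastLM q w) = 0 := by
          rw [hcw, Matrix.mulVec_smul]
          have hz0 : AQ.mulVec z = 0 := hz
          rw [hz0, smul_zero]
        rw [hcast_mulVec] at h1
        funext j
        have h2 := congrFun h1 j
        simp only [Pi.zero_apply, Int.cast_eq_zero] at h2
        exact h2
      have hbmem : (⟨w, hwker⟩ : ↥(LinearMap.ker (Matrix.mulVecLin A))) ∈
          Submodule.span ℤ (Set.range b) := by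
        rw [b.span_eq]; trivial
      have hmap : f ⟨w, hwker⟩ ∈ Submodule.span ℤ (Set.range c) := by
        have := Submodule.mem_map_of_mem (f := f) hbmem
        rw [Submodule.map_span, ← Set.range_comp] at this
        exact this
      have hmapQ : intCastLM q w ∈ Submodule.span ℚ (Set.range c) :=
        Submodule.span_subset_span ℤ ℚ _ hmap
      have hzeq : z = (((N : ℤ) : ℚ))⁻¹ • intCastLM q w := by
        rw [hcw, smul_smul, inv_mul_cancel₀ hNne, one_smul]
      rw [hzeq]
      exact Submodule.smul_mem _ _ hmapQ
  -- dimension count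
  have hrankT : Function.Injective (Matrix.mulVecLin AQᵀ) := by
    rw [← LinearMap.ker_eq_bot, LinearMap.ker_eq_bot']
    intro v hv
    simp only [mulVecLin_apply] at hv
    rw [Matrix.mulVec_transpose] at hv
    obtain ⟨N, hN⟩ := IsLocalization.exist_integer_multiples_of_finite
      (nonZeroDivisors ℤ) v
    choose u hu using hN
    have hNne : ((N : ℤ) : ℚ) ≠ 0 := by
      have := nonZeroDivisors.coe_ne_zero N
      exact_mod_cast this
    have hcu : ∀ i, ((u i : ℤ) : ℚ) = ((N : ℤ) : ℚ) * v i := by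
      intro i
      have := hu i
      simpa [zsmul_eq_mul] using this
    have huA : Matrix.vecMul u A = 0 := by
      have h1 : Matrix.vecMul (fun i => ((u i : ℤ) : ℚ)) AQ = 0 := by
        have heq : (fun i => ((u i : ℤ) : ℚ)) = ((N : ℤ) : ℚ) • v := by
          funext i; rw [hcu i]; rfl
        rw [heq, Matrix.smul_vecMul, hv, smul_zero]
      funext j
      have h2 := congrFun h1 j
      have h3 := (Int.castRingHom ℚ).map_vecMul A u j
      rw [show A.map ⇑(Int.castRingHom ℚ) = AQ from rfl,
        show (⇑(Int.castRingHom ℚ) ∘ u) = (fun i => ((u i : ℤ) : ℚ)) from rfl] at h3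
      rw [← h3] at h2
      simp only [Pi.zero_apply] at h2 ⊢
      rwa [show ((Int.castRingHom ℚ) ((u ᵥ* A) j)) = (((u ᵥ* A) j : ℤ) : ℚ) from rfl,
        Int.cast_eq_zero] at h2
    have hu0 : u = 0 := hA (by simpa using huA)
    funext i
    have hci := hcu i
    rw [hu0] at hci
    simp only [Pi.zero_apply, Int.cast_zero] at hci
    rcases mul_eq_zero.1 hci.symm with h | h
    · exact absurd h hNne
    · exact h
  have hrankAQ : AQ.rank = p := by
    have h1 : AQᵀ.rank = p := by
      rw [Matrix.rank, LinearMap.finrank_range_of_inj hrankT]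
      simp [Module.finrank_pi]
    rw [← Matrix.rank_transpose, h1]
  have hdim : Module.finrank ℚ (LinearMap.ker (Matrix.mulVecLin AQ)) = q - p := by
    have hrn := LinearMap.finrank_range_add_finrank_ker (Matrix.mulVecLin AQ)
    have hfr : Module.finrank ℚ (LinearMap.range (Matrix.mulVecLin AQ)) = p := hrankAQ
    have hq : Module.finrank ℚ (Fin q → ℚ) = q := by simp [Module.finrank_pi]
    omega
  have ht : t = q - p := by
    rw [← hdim, ← hsp, finrank_span_eq_card hli, Fintype.card_fin]
  subst ht
  exact ⟨b.equivFun.toAddEquiv⟩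


open Matrix

theorem main_thm
    (r rZ n : ℕ) (hrn : r ≤ n)
    (HX : Matrix (Fin r) (Fin n) ℤ) (HZ : Matrix (Fin rZ) (Fin n) ℤ)
    (h0 : HZ * HXᵀ = 0)
    (hZrank : Function.Injective fun v : Fin rZ → ℤ => Matrix.vecMul v HZ)
    (D : Matrix (Fin r) (Fin n) ℤ)
    (hD : (∃ U U' : Matrix (Fin r) (Fin r) ℤ, ∃ V V' : Matrix (Fin n) (Fin n) ℤ,
      U * U' = 1 ∧ U' * U = 1 ∧ V * V' = 1 ∧ V' * V = 1 ∧ U * HX * V = D) ∧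
      (∀ (i : Fin r) (j : Fin n), (i : ℕ) ≠ (j : ℕ) → D i j = 0) ∧
      (∀ (i : Fin r) (j : Fin n), (i : ℕ) = (j : ℕ) → 0 ≤ D i j) ∧
      (∀ (i i' : Fin r) (j j' : Fin n), (i : ℕ) = (j : ℕ) → (i' : ℕ) = (j' : ℕ) →
          (i : ℕ) + 1 = (i' : ℕ) → D i j ∣ D i' j'))
    (d : Fin r → ℕ) (hd : ∀ i : Fin r, (d i : ℤ) = D i (Fin.castLE hrn i))
    (hdpos : ∀ i, 0 < d i) :
    Nonempty
      ((↥(LinearMap.ker (Matrix.mulVecLin HZ)) ⧸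
          Submodule.comap (LinearMap.ker (Matrix.mulVecLin HZ)).subtype
            (LinearMap.range (Matrix.mulVecLin (HXᵀ)))) ≃+
        (((i : Fin r) → ZMod (d i)) × (Fin (n - r - rZ) → ℤ))) := by
  classical
  obtain ⟨⟨U, U', V, V', hUU', hU'U, hVV', hV'V, hUHV⟩, hoff, _hnn, _hdvd⟩ := hD
  have hm : r + (n - r) = n := by omega
  set e : Fin r ⊕ Fin (n - r) ≃ Fin n := finSumFinEquiv.trans (finCongr hm) with he
  set ι1 : Fin r → Fin n := fun i => e (Sum.inl i) with hι1def
  set ι2 : Fin (n - r) → Fin n := fun j => e (Sum.inr j) with hι2def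
  have hι1 : ∀ i, (ι1 i : ℕ) = (i : ℕ) := by
    intro i; simp [hι1def, he]
  have hι2 : ∀ j, (ι2 j : ℕ) = r + (j : ℕ) := by
    intro j; simp [hι2def, he]
  have hcases : ∀ j : Fin n, (∃ i, j = ι1 i) ∨ ∃ j', j = ι2 j' := by
    intro j
    rcases h : e.symm j with i | j'
    · left
      exact ⟨i, by show j = e (Sum.inl i); rw [← h, Equiv.apply_symm_apply]⟩
    · right
      exact ⟨j', by show j = e (Sum.inr j'); rw [← h, Equiv.apply_symm_apply]⟩
  -- basic matrix identities
  have hVTV'T : Vᵀ * V'ᵀ = 1 := by rw [← Matrix.transpose_mul, hV'V, Matrix.transpose_one]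
  have hV'TVT : V'ᵀ * Vᵀ = 1 := by rw [← Matrix.transpose_mul, hVV', Matrix.transpose_one]
  have hU'TUT : U'ᵀ * Uᵀ = 1 := by rw [← Matrix.transpose_mul, hUU', Matrix.transpose_one]
  have hHX : HX = U' * D * V' := by
    calc HX = (U' * U) * HX * (V * V') := by
          rw [hU'U, hVV', Matrix.one_mul, Matrix.mul_one]
    _ = U' * (U * HX * V) * V' := by simp only [Matrix.mul_assoc]
    _ = U' * D * V' := by rw [hUHV]
  have hHXT : HXᵀ = V'ᵀ * (Dᵀ * U'ᵀ) := by
    rw [hHX]; simp only [Matrix.transpose_mul, Matrix.mul_assoc]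
  -- D facts
  have hdiag : ∀ i, D i (ι1 i) = (d i : ℤ) := by
    intro i
    have h1 : ι1 i = Fin.castLE hrn i := by
      apply Fin.ext; rw [hι1]; simp
    rw [h1, ← hd]
  have hDoff : ∀ (i : Fin r) (j : Fin n), j ≠ ι1 i → D i j = 0 := by
    intro i j hne
    apply hoff
    intro hval
    exact hne (Fin.ext ((hval.symm).trans (hι1 i).symm))
  have hD2 : ∀ (i : Fin r) (j : Fin (n - r)), D i (ι2 j) = 0 := by
    intro i j
    apply hoff
    rw [hι2]
    have := i.isLt
    omega
  -- transpose-mulVec computations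
  have hDmul1 : ∀ (c : Fin r → ℤ) (i : Fin r), (Dᵀ.mulVec c) (ι1 i) = (d i : ℤ) * c i := by
    intro c i
    simp only [Matrix.mulVec, dotProduct, Matrix.transpose_apply]
    rw [Finset.sum_eq_single i]
    · rw [hdiag]
    · intro k _ hk
      rw [hDoff k (ι1 i) (fun hcon => hk (Fin.ext (by rw [← hι1 k, ← hcon, hι1 i])))]
      ring
    · intro h; exact absurd (Finset.mem_univ i) h
  have hDmul2 : ∀ (c : Fin r → ℤ) (j : Fin (n - r)), (Dᵀ.mulVec c) (ι2 j) = 0 := by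
    intro c j
    simp only [Matrix.mulVec, dotProduct, Matrix.transpose_apply]
    apply Finset.sum_eq_zero
    intro k _
    rw [hD2 k j]; ring
  -- the matrix K and its properties
  set K : Matrix (Fin rZ) (Fin n) ℤ := HZ * V'ᵀ with hK
  have hKDT : K * Dᵀ = 0 := by
    have h1 : (K * Dᵀ) * U'ᵀ = 0 := by
      rw [hK, Matrix.mul_assoc, Matrix.mul_assoc, ← hHXT, h0]
    calc K * Dᵀ = (K * Dᵀ) * (U'ᵀ * Uᵀ) := by rw [hU'TUT, Matrix.mul_one]
    _ = ((K * Dᵀ) * U'ᵀ) * Uᵀ := by simp only [Matrix.mul_assoc]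
    _ = 0 := by rw [h1, Matrix.zero_mul]
  have hKcol : ∀ (i : Fin rZ) (i' : Fin r), K i (ι1 i') = 0 := by
    intro i i'
    have h3 := congrFun (congrFun hKDT i) i'
    rw [Matrix.mul_apply] at h3
    simp only [Matrix.transpose_apply, Matrix.zero_apply] at h3
    rw [Finset.sum_eq_single (ι1 i')] at h3
    · rw [hdiag] at h3
      have hne : (d i' : ℤ) ≠ 0 := by exact_mod_cast (hdpos i').ne'
      rcases mul_eq_zero.1 h3 with h | h
      · exact h
      · exact absurd h hne
    · intro b _ hb
      rw [hDoff i' b hb]; ring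
    · intro h; exact absurd (Finset.mem_univ _) h
  set K₂ : Matrix (Fin rZ) (Fin (n - r)) ℤ := Matrix.of (fun i j => K i (ι2 j)) with hK₂
  have hsum : ∀ (g : Fin n → ℤ), ∑ j, g j =
      (∑ i : Fin r, g (ι1 i)) + ∑ j : Fin (n - r), g (ι2 j) := by
    intro g
    rw [← Equiv.sum_comp e g, Fintype.sum_sum_type]
  have hKmv : ∀ y : Fin n → ℤ, K.mulVec y = K₂.mulVec (fun j => y (ι2 j)) := by
    intro y
    funext i
    simp only [Matrix.mulVec, dotProduct, hK₂, Matrix.of_apply]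
    rw [hsum (fun j => K i j * y j)]
    simp only [hKcol, zero_mul, Finset.sum_const_zero, zero_add]
  have hK2rank : Function.Injective fun v : Fin rZ → ℤ => Matrix.vecMul v K₂ := by
    intro v v' hvv'
    have hvv'' : Matrix.vecMul v K₂ = Matrix.vecMul v' K₂ := hvv'
    apply hZrank
    show Matrix.vecMul v HZ = Matrix.vecMul v' HZ
    have hKeq : Matrix.vecMul v K = Matrix.vecMul v' K := by
      funext j
      rcases hcases j with ⟨i, rfl⟩ | ⟨j', rfl⟩
      · have hz0 : ∀ w : Fin rZ → ℤ, Matrix.vecMul w K (ι1 i) = 0 := by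
          intro w
          simp only [Matrix.vecMul, dotProduct]
          apply Finset.sum_eq_zero
          intro l _
          rw [hKcol l i]; ring
        rw [hz0, hz0]
      · have hw : ∀ w : Fin rZ → ℤ, Matrix.vecMul w K (ι2 j') = Matrix.vecMul w K₂ j' := by
          intro w
          simp only [Matrix.vecMul, dotProduct, hK₂, Matrix.of_apply]
        rw [hw, hw, hvv'']
    have h2 : Matrix.vecMul (Matrix.vecMul v HZ) V'ᵀ = Matrix.vecMul (Matrix.vecMul v' HZ) V'ᵀ := by
      rw [Matrix.vecMul_vecMul, Matrix.vecMul_vecMul, ← hK]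
      exact hKeq
    calc Matrix.vecMul v HZ
        = Matrix.vecMul (Matrix.vecMul (Matrix.vecMul v HZ) V'ᵀ) Vᵀ := by
          rw [Matrix.vecMul_vecMul, hV'TVT, Matrix.vecMul_one]
    _ = Matrix.vecMul (Matrix.vecMul (Matrix.vecMul v' HZ) V'ᵀ) Vᵀ := by rw [h2]
    _ = Matrix.vecMul v' HZ := by rw [Matrix.vecMul_vecMul, hV'TVT, Matrix.vecMul_one]
  obtain ⟨g⟩ := ker_intMatrix_free_rank K₂ hK2rank
  -- the linear map F
  set Y : (Fin n → ℤ) →ₗ[ℤ] (Fin n → ℤ) := Matrix.mulVecLin Vᵀ with hY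
  set F1 : (Fin n → ℤ) →ₗ[ℤ] ((i : Fin r) → ZMod (d i)) :=
    LinearMap.pi (fun i => (Int.castAddHom (ZMod (d i))).toIntLinearMap.comp
      (LinearMap.proj (ι1 i))) with hF1
  set F2 : (Fin n → ℤ) →ₗ[ℤ] (Fin (n - r) → ℤ) := LinearMap.funLeft ℤ ℤ ι2 with hF2
  have hKVT : K * Vᵀ = HZ := by rw [hK, Matrix.mul_assoc, hV'TVT, Matrix.mul_one]
  have hmem2 : ∀ x : ↥(LinearMap.ker (Matrix.mulVecLin HZ)),
      F2 (Y (x : Fin n → ℤ)) ∈ LinearMap.ker (Matrix.mulVecLin K₂) := by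
    intro x
    rw [LinearMap.mem_ker, mulVecLin_apply]
    have h1 : F2 (Y (x : Fin n → ℤ)) = fun j => (Vᵀ.mulVec (x : Fin n → ℤ)) (ι2 j) := rfl
    rw [h1, ← hKmv, Matrix.mulVec_mulVec, hKVT]
    exact x.2
  set F : ↥(LinearMap.ker (Matrix.mulVecLin HZ)) →ₗ[ℤ]
      (((i : Fin r) → ZMod (d i)) × ↥(LinearMap.ker (Matrix.mulVecLin K₂))) :=
    LinearMap.prod
      (F1.comp (Y.comp (LinearMap.ker (Matrix.mulVecLin HZ)).subtype))
      (LinearMap.codRestrict _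
        (F2.comp (Y.comp (LinearMap.ker (Matrix.mulVecLin HZ)).subtype)) hmem2) with hF
  have hFapply : ∀ x : ↥(LinearMap.ker (Matrix.mulVecLin HZ)), F x =
      (fun i => (((Vᵀ.mulVec (x : Fin n → ℤ)) (ι1 i) : ℤ) : ZMod (d i)),
       ⟨fun j => (Vᵀ.mulVec (x : Fin n → ℤ)) (ι2 j),
         (show (fun j => (Vᵀ.mulVec (x : Fin n → ℤ)) (ι2 j)) ∈ LinearMap.ker (Matrix.mulVecLin K₂)
           from hmem2 x)⟩) := fun x => rfl
  -- kernel of F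
  have hkerF : LinearMap.ker F = Submodule.comap
      (LinearMap.ker (Matrix.mulVecLin HZ)).subtype
      (LinearMap.range (Matrix.mulVecLin HXᵀ)) := by
    ext x
    rw [LinearMap.mem_ker, hFapply, Submodule.mem_comap, LinearMap.mem_range,
      Prod.mk_eq_zero, Submodule.mk_eq_zero]
    constructor
    · rintro ⟨h1, h2⟩
      have hex : ∀ i, ∃ c, (Vᵀ.mulVec (x : Fin n → ℤ)) (ι1 i) = (d i : ℤ) * c := by
        intro i
        have hdv : ((d i : ℕ) : ℤ) ∣ (Vᵀ.mulVec (x : Fin n → ℤ)) (ι1 i) := by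
          rw [← ZMod.intCast_zmod_eq_zero_iff_dvd]
          exact congrFun h1 i
        exact hdv
      choose cv hcv using hex
      have hy : Vᵀ.mulVec (x : Fin n → ℤ) = Dᵀ.mulVec cv := by
        funext j
        rcases hcases j with ⟨i, rfl⟩ | ⟨j', rfl⟩
        · rw [hDmul1, ← hcv i]
        · rw [hDmul2]
          exact congrFun h2 j'
      refine ⟨Uᵀ.mulVec cv, ?_⟩
      show HXᵀ.mulVec (Uᵀ.mulVec cv) = (x : Fin n → ℤ)
      rw [Matrix.mulVec_mulVec, hHXT]
      have hmm : V'ᵀ * (Dᵀ * U'ᵀ) * Uᵀ = V'ᵀ * Dᵀ := by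
        simp only [Matrix.mul_assoc]
        rw [hU'TUT, Matrix.mul_one]
      rw [hmm, ← Matrix.mulVec_mulVec, ← hy, Matrix.mulVec_mulVec, hV'TVT,
        Matrix.one_mulVec]
    · rintro ⟨w, hw⟩
      have hw2 : HXᵀ.mulVec w = (x : Fin n → ℤ) := hw
      have hy : Vᵀ.mulVec (x : Fin n → ℤ) = Dᵀ.mulVec (U'ᵀ.mulVec w) := by
        rw [← hw2, Matrix.mulVec_mulVec, Matrix.mulVec_mulVec, hHXT,
          ← Matrix.mul_assoc Vᵀ V'ᵀ, hVTV'T, Matrix.one_mul, ← Matrix.mulVec_mulVec]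
      constructor
      · funext i
        show (((Vᵀ.mulVec (x : Fin n → ℤ)) (ι1 i) : ℤ) : ZMod (d i)) = 0
        rw [congrFun hy (ι1 i), hDmul1, ZMod.intCast_zmod_eq_zero_iff_dvd]
        exact dvd_mul_right _ _
      · funext j
        show (Vᵀ.mulVec (x : Fin n → ℤ)) (ι2 j) = 0
        rw [congrFun hy (ι2 j), hDmul2]
  -- surjectivity of F
  have hsurj : Function.Surjective F := by
    rintro ⟨cz, z, hz⟩
    have hax : ∀ i, ∃ a : ℤ, ((a : ℤ) : ZMod (d i)) = cz i := fun i =>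
      ZMod.intCast_surjective (cz i)
    choose a ha using hax
    set y : Fin n → ℤ := fun j => Sum.elim a z (e.symm j) with hy
    have hy1 : ∀ i, y (ι1 i) = a i := by
      intro i
      have hs : e.symm (ι1 i) = Sum.inl i := by rw [hι1def]; exact e.symm_apply_apply _
      rw [hy]
      show Sum.elim a z (e.symm (ι1 i)) = a i
      rw [hs]; rfl
    have hy2 : ∀ j, y (ι2 j) = z j := by
      intro j
      have hs : e.symm (ι2 j) = Sum.inr j := by rw [hι2def]; exact e.symm_apply_apply _
      rw [hy]
      show Sum.elim a z (e.symm (ι2 j)) = z j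
      rw [hs]; rfl
    have hxker : V'ᵀ.mulVec y ∈ LinearMap.ker (Matrix.mulVecLin HZ) := by
      rw [LinearMap.mem_ker, mulVecLin_apply, Matrix.mulVec_mulVec]
      rw [show HZ * V'ᵀ = K from hK.symm, hKmv]
      rw [show (fun j => y (ι2 j)) = z from funext hy2]
      exact hz
    refine ⟨⟨V'ᵀ.mulVec y, hxker⟩, ?_⟩
    rw [hFapply]
    have hcoe : ((⟨V'ᵀ.mulVec y, hxker⟩ : ↥(LinearMap.ker (Matrix.mulVecLin HZ))) :
        Fin n → ℤ) = V'ᵀ.mulVec y := rfl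
    have hyx : Vᵀ.mulVec (V'ᵀ.mulVec y) = y := by
      rw [Matrix.mulVec_mulVec, hVTV'T, Matrix.one_mulVec]
    refine Prod.ext ?_ ?_
    · show (fun i => (((Vᵀ.mulVec (V'ᵀ.mulVec y)) (ι1 i) : ℤ) : ZMod (d i))) = cz
      funext i
      rw [hyx, hy1 i, ha i]
    · apply Subtype.ext
      show (fun j => (Vᵀ.mulVec (V'ᵀ.mulVec y)) (ι2 j)) = z
      funext j
      rw [hyx, hy2 j]
  refine ⟨?_⟩
  exact ((Submodule.quotEquivOfEq _ _ hkerF.symm).trans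
    (F.quotKerEquivOfSurjective hsurj)).toAddEquiv.trans
    (AddEquiv.prodCongr (AddEquiv.refl _) g)

/-- Homology of the chain complex `ℤ^r → ℤⁿ → ℤ^{r_Z}` with boundary maps `H_Xᵀ` and
`H_Zᵀ`: if the Smith normal form of `H_X` has (positive) diagonal entries `d₁, …, d_r` and
`H_Z` has full row rank with `H_Z H_Xᵀ = 0`, then
`ker(H_Zᵀ)/im(H_Xᵀ) ≅ (⊕ᵢ ℤ_{dᵢ}) ⊕ ℤ^{n-r-r_Z}`. -/
theorem homological_rotor_code_logical_space
    (r rZ n : ℕ) (hrn : r ≤ n)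
    (HX : Matrix (Fin r) (Fin n) ℤ) (HZ : Matrix (Fin rZ) (Fin n) ℤ)
    (h0 : HZ * HXᵀ = 0)
    (hZrank : Function.Injective fun v : Fin rZ → ℤ => Matrix.vecMul v HZ)
    (D : Matrix (Fin r) (Fin n) ℤ) (hD : IsSmithNormalFormOf D HX)
    (d : Fin r → ℕ) (hd : ∀ i : Fin r, (d i : ℤ) = D i (Fin.castLE hrn i))
    (hdpos : ∀ i, 0 < d i) :
    Nonempty
      ((↥(LinearMap.ker (Matrix.mulVecLin HZ)) ⧸
          Submodule.comap (LinearMap.ker (Matrix.mulVecLin HZ)).subtype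
            (LinearMap.range (Matrix.mulVecLin (HXᵀ)))) ≃+
        (((i : Fin r) → ZMod (d i)) × (Fin (n - r - rZ) → ℤ))) := by
  exact main_thm r rZ n hrn HX HZ h0 hZrank D hD d hd hdpos
end

section
/- The rotor coherent state |ξ⟩ = Σ_{l∈ℤ} ξ^{-l} e^{-l²/2} |l⟩, for ξ ∈ ℂ \ {0}, is a well-defined (normalizable) vector in ℓ²(ℤ), and satisfies e^{iâ}|ξ⟩ = ξ|ξ⟩ where e^{iâ} = X(1)·e^{-l̂ - 1/2}, with X(1)|l⟩ = |l+1⟩ and e^{-l̂}|l⟩ = e^{-l}|l⟩; moreover e^{-(ln χ) l̂}|ξ⟩ = |χξ⟩ for every χ > 0. -/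
lemma auxNat (a : ℝ) : Summable (fun n : ℕ => Real.exp (a * n - (n : ℝ)^2)) := by
  apply summable_of_ratio_norm_eventually_le (r := 1/2) (by norm_num)
  filter_upwards [Filter.eventually_ge_atTop ⌈a⌉₊] with n hn
  have ha : a ≤ n := le_trans (Nat.le_ceil a) (by exact_mod_cast hn)
  have h1 : Real.exp (a * (n+1) - ((n:ℝ)+1)^2)
      = Real.exp (a - 2*n - 1) * Real.exp (a * n - (n:ℝ)^2) := by
    rw [← Real.exp_add]; ring_nf
  have h2 : Real.exp (a - 2*n - 1) ≤ 1/2 := by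
    have : a - 2*n - 1 ≤ -1 := by nlinarith [Nat.cast_nonneg (α := ℝ) n]
    calc Real.exp (a - 2*n - 1) ≤ Real.exp (-1) := Real.exp_le_exp.2 this
      _ ≤ 1/2 := by
        rw [Real.exp_neg]
        rw [inv_le_comm₀ (Real.exp_pos 1) (by norm_num)]
        have := Real.add_one_le_exp (1:ℝ)
        linarith
  simp only [Real.norm_eq_abs, abs_of_pos (Real.exp_pos _)]
  push_cast
  rw [h1]
  have := Real.exp_pos (a * n - (n:ℝ)^2)
  nlinarith

lemma auxInt (b : ℝ) : Summable (fun l : ℤ => Real.exp (b * l - (l : ℝ)^2)) := by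
  rw [summable_int_iff_summable_nat_and_neg]
  constructor
  · exact (auxNat b).congr (fun n => by push_cast; ring_nf)
  · exact (auxNat (-b)).congr (fun n => by push_cast; ring_nf)

/-- The rotor coherent state `|ξ⟩ = Σ_{l∈ℤ} ξ^{-l} e^{-l²/2} |l⟩` as a function on the
momentum basis `{|l⟩ : l ∈ ℤ}` of `ℓ²(ℤ)`. -/
noncomputable def rotorCoherent (ξ : ℂ) : ℤ → ℂ :=
  fun l => ξ ^ (-l) * Complex.exp (-((l : ℂ) ^ 2) / 2)

/-- The shift `X(1)`: `X(1)|l⟩ = |l+1⟩`. -/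
def rotorShiftOne (f : ℤ → ℂ) : ℤ → ℂ := fun l => f (l - 1)

/-- For every `ξ ∈ ℂ \ {0}` the rotor coherent state `|ξ⟩` is a well-defined
(normalizable) vector of `ℓ²(ℤ)`, it is an eigenvector of `e^{iâ} = X(1)·e^{-l̂-1/2}`
with eigenvalue `ξ`, and `e^{-(ln χ)l̂}|ξ⟩ = |χξ⟩` for every `χ > 0`. -/
theorem rotor_coherent_state_properties (ξ : ℂ) (hξ : ξ ≠ 0) :
    Memℓp (rotorCoherent ξ) 2 ∧
    rotorShiftOne (fun l => Complex.exp (-(l : ℂ) - 1 / 2) * rotorCoherent ξ l)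
      = ξ • rotorCoherent ξ ∧
    ∀ χ : ℝ, 0 < χ →
      (fun l : ℤ => (χ : ℂ) ^ (-l) * rotorCoherent ξ l) = rotorCoherent (χ * ξ) := by
  have hξn : (0:ℝ) < ‖ξ‖ := norm_pos_iff.2 hξ
  refine ⟨?_, ?_, ?_⟩
  · apply memℓp_gen
    have htoReal : (2 : ENNReal).toReal = 2 := by norm_num
    rw [htoReal]
    apply (auxInt (-2 * Real.log ‖ξ‖)).congr
    intro l
    have h1 : ‖rotorCoherent ξ l‖ = Real.exp (Real.log ‖ξ‖ * (-l) - (l:ℝ)^2/2) := by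
      have harg : (-((l : ℂ) ^ 2) / 2) = ((-(l:ℝ)^2/2 : ℝ) : ℂ) := by push_cast; ring
      rw [rotorCoherent, norm_mul, norm_zpow, harg]
      rw [show ‖Complex.exp ((-(l:ℝ)^2/2 : ℝ) : ℂ)‖ = Real.exp (-(l:ℝ)^2/2) by
        rw [Complex.norm_exp, Complex.ofReal_re]]
      rw [show ‖ξ‖ ^ (-l) = Real.exp (Real.log ‖ξ‖ * (-l)) by
        rw [← Real.rpow_intCast, Real.rpow_def_of_pos hξn]; push_cast; ring_nf]
      rw [← Real.exp_add]; ring_nf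
    rw [h1, ← Real.exp_mul]
    congr 1
    ring
  · funext l
    simp only [rotorShiftOne, rotorCoherent, Pi.smul_apply, smul_eq_mul]
    have hz : ξ ^ (-(l-1)) = ξ * ξ ^ (-l) := by
      rw [show -(l-1) = 1 + (-l) by ring, zpow_add₀ hξ, zpow_one]
    rw [hz]
    have h : Complex.exp (-((l-1 : ℤ) : ℂ) - 1/2) * Complex.exp (-(((l-1:ℤ) : ℂ))^2/2)
        = Complex.exp (-((l:ℂ))^2/2) := by
      rw [← Complex.exp_add]; congr 1; push_cast; ring
    push_cast at h ⊢
    linear_combination (ξ * ξ ^ (-l)) * h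
  · intro χ hχ
    funext l
    simp only [rotorCoherent, mul_zpow]
    ring
end
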